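/- Let n ≥ 2 and let e be a random vector uniformly distributed on the unit Euclidean sphere S₂ⁿ(1) ⊂ ℝⁿ. Then E[‖e‖_∞²] ≤ 4·(ln n)/n. -/

import Mathlib

open MeasureTheory Metric

/-- A probability measure on `ℝⁿ` which is carried by the unit Euclidean sphere and is
invariant under all linear isometries: the (unique) uniform distribution on the sphere. -/
def IsUniformOnSphere {n : ℕ} (σ : Measure (EuclideanSpace ℝ (Fin n))) : Prop :=
  IsProbabilityMeasure σ ∧
    σ (Metric.sphere (0 : EuclideanSpace ℝ (Fin n)) 1)ᶜ = 0 ∧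
    ∀ T : EuclideanSpace ℝ (Fin n) ≃ₗᵢ[ℝ] EuclideanSpace ℝ (Fin n), σ.map T = σ

/-- The `ℓ_∞` norm `maxᵢ |xᵢ|` on `ℝⁿ`. -/
noncomputable def linftyNorm {n : ℕ} (x : EuclideanSpace ℝ (Fin n)) : ℝ :=
  ⨆ i, |x i|

namespace SphereMomentAux

noncomputable section

open Finset Real

abbrev Euc (n : ℕ) := EuclideanSpace ℝ (Fin n)

/-! ### Rotation isometries -/

variable {n : ℕ}

/-- Rotation by angle `θ` in the coordinate plane `(a, b)`. -/
def rotFun (a b : Fin n) (θ : ℝ) (x : Euc n) : Euc n :=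
  WithLp.toLp 2 fun i => if i = a then Real.cos θ * x a - Real.sin θ * x b
    else if i = b then Real.sin θ * x a + Real.cos θ * x b else x i

lemma rotFun_apply_a (a b : Fin n) (θ : ℝ) (x : Euc n) :
    rotFun a b θ x a = Real.cos θ * x a - Real.sin θ * x b := by
  simp [rotFun]

lemma rotFun_apply_b {a b : Fin n} (hab : a ≠ b) (θ : ℝ) (x : Euc n) :
    rotFun a b θ x b = Real.sin θ * x a + Real.cos θ * x b := by
  simp [rotFun, hab.symm]

lemma rotFun_apply_other {a b i : Fin n} (hia : i ≠ a) (hib : i ≠ b) (θ : ℝ) (x : Euc n) :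
    rotFun a b θ x i = x i := by
  simp [rotFun, hia, hib]

lemma sum_split (a b : Fin n) (hab : a ≠ b) (g : Fin n → ℝ) :
    ∑ i, g i = g a + g b + ∑ i ∈ Finset.univ \ {a, b}, g i := by
  have hsub : ({a, b} : Finset (Fin n)) ⊆ Finset.univ := Finset.subset_univ _
  rw [← Finset.sum_sdiff hsub, Finset.sum_pair hab]
  ring

lemma sum_sq_rotFun (a b : Fin n) (hab : a ≠ b) (θ : ℝ) (x : Euc n) :
    ∑ i, (rotFun a b θ x i) ^ 2 = ∑ i, (x i) ^ 2 := by
  rw [sum_split a b hab (fun i => (rotFun a b θ x i) ^ 2),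
    sum_split a b hab (fun i => (x i) ^ 2)]
  have h1 : ∑ i ∈ Finset.univ \ {a, b}, (rotFun a b θ x i) ^ 2
      = ∑ i ∈ Finset.univ \ {a, b}, (x i) ^ 2 := by
    refine Finset.sum_congr rfl fun i hi => ?_
    simp only [Finset.mem_sdiff, Finset.mem_insert, Finset.mem_singleton] at hi
    rw [rotFun_apply_other (by tauto) (by tauto)]
  rw [h1, rotFun_apply_a, rotFun_apply_b hab]
  have := Real.sin_sq_add_cos_sq θ
  nlinarith [this]

lemma rotFun_leftInv {a b : Fin n} (hab : a ≠ b) (θ : ℝ) (x : Euc n) :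
    rotFun a b (-θ) (rotFun a b θ x) = x := by
  ext i
  rcases eq_or_ne i a with rfl | hia
  · rw [rotFun_apply_a, rotFun_apply_a, rotFun_apply_b hab, Real.cos_neg, Real.sin_neg]
    have := Real.sin_sq_add_cos_sq θ
    linear_combination (x i) * this
  · rcases eq_or_ne i b with rfl | hib
    · rw [rotFun_apply_b hab, rotFun_apply_a, rotFun_apply_b hab, Real.cos_neg, Real.sin_neg]
      have := Real.sin_sq_add_cos_sq θ
      linear_combination (x i) * this
    · rw [rotFun_apply_other hia hib, rotFun_apply_other hia hib]

/-- Rotation in the `(a,b)` coordinate plane as a linear isometry equivalence. -/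
def rot (a b : Fin n) (hab : a ≠ b) (θ : ℝ) : Euc n ≃ₗᵢ[ℝ] Euc n where
  toFun := rotFun a b θ
  invFun := rotFun a b (-θ)
  map_add' x y := by
    ext i
    show rotFun a b θ (x + y) i = rotFun a b θ x i + rotFun a b θ y i
    simp only [rotFun, PiLp.add_apply, PiLp.toLp_apply]
    split_ifs <;> ring
  map_smul' c x := by
    ext i
    show rotFun a b θ (c • x) i = c * rotFun a b θ x i
    simp only [rotFun, PiLp.smul_apply, smul_eq_mul, PiLp.toLp_apply]
    split_ifs <;> ring
  left_inv x := rotFun_leftInv hab θ x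
  right_inv x := by
    have := rotFun_leftInv hab (-θ) x
    rwa [neg_neg] at this
  norm_map' x := by
    rw [EuclideanSpace.norm_eq, EuclideanSpace.norm_eq]
    congr 1
    simpa [Real.norm_eq_abs, sq_abs] using sum_sq_rotFun a b hab θ x

lemma rot_apply_a (a b : Fin n) (hab : a ≠ b) (θ : ℝ) (x : Euc n) :
    rot a b hab θ x a = Real.cos θ * x a - Real.sin θ * x b := rotFun_apply_a a b θ x

lemma rot_apply_b (a b : Fin n) (hab : a ≠ b) (θ : ℝ) (x : Euc n) :
    rot a b hab θ x b = Real.sin θ * x a + Real.cos θ * x b := rotFun_apply_b hab θ x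

/-- Coordinate swap as a linear isometry equivalence. -/
def swapIso (a b : Fin n) : Euc n ≃ₗᵢ[ℝ] Euc n :=
  LinearIsometryEquiv.piLpCongrLeft 2 ℝ ℝ (Equiv.swap a b)

lemma swapIso_apply (a b : Fin n) (x : Euc n) (i : Fin n) :
    swapIso a b x i = x (Equiv.swap a b i) := by
  simp [swapIso, LinearIsometryEquiv.piLpCongrLeft_apply, Equiv.piCongrLeft']

/-! ### Measure theory basics -/

section Measure

variable {m : ℕ} {σ : Measure (Euc (m + 2))}

lemma zero_ne_one' : (0 : Fin (m + 2)) ≠ 1 := by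
  simp [Fin.ext_iff]

lemma ae_norm_one (hσ : IsUniformOnSphere σ) : ∀ᵐ e ∂σ, ‖e‖ = 1 := by
  have h := hσ.2.1
  refine measure_mono_null ?_ h
  intro e he
  simp only [Set.mem_compl_iff, mem_sphere_iff_norm, sub_zero, Set.mem_setOf_eq]
  simpa using he

lemma ae_abs_le (hσ : IsUniformOnSphere σ) : ∀ᵐ e ∂σ, ∀ i, |e i| ≤ 1 := by
  filter_upwards [ae_norm_one hσ] with e he i
  calc |e i| = Real.sqrt ((e i) ^ 2) := (Real.sqrt_sq_eq_abs _).symm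
    _ ≤ Real.sqrt (∑ j, (e j) ^ 2) := by
        apply Real.sqrt_le_sqrt
        exact Finset.single_le_sum (f := fun j => (e j) ^ 2)
          (fun j _ => sq_nonneg _) (Finset.mem_univ i)
    _ = ‖e‖ := by
        rw [EuclideanSpace.norm_eq]
        congr 1
        simp [Real.norm_eq_abs, sq_abs]
    _ = 1 := he

lemma ae_sum_sq (hσ : IsUniformOnSphere σ) : ∀ᵐ e ∂σ, ∑ i, (e i) ^ 2 = 1 := by
  filter_upwards [ae_norm_one hσ] with e he
  have : ‖e‖ ^ 2 = 1 := by rw [he]; norm_num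
  rw [EuclideanSpace.norm_eq] at this
  rw [Real.sq_sqrt (by positivity)] at this
  simpa [Real.norm_eq_abs, sq_abs] using this

lemma measurable_coord (i : Fin (m + 2)) :
    Measurable fun e : Euc (m + 2) => e i :=
  (PiLp.continuous_apply 2 _ i).measurable

lemma integrable_bound (hσ : IsUniformOnSphere σ) {f : Euc (m + 2) → ℝ} (hf : Measurable f) {C : ℝ}
    (h : ∀ᵐ e ∂σ, |f e| ≤ C) : Integrable f σ := by
  haveI : IsProbabilityMeasure σ := hσ.1
  exact (integrable_const C).mono' hf.aestronglyMeasurable (by simpa using h)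

lemma integral_comp_iso (hσ : IsUniformOnSphere σ) (T : Euc (m + 2) ≃ₗᵢ[ℝ] Euc (m + 2)) {f : Euc (m + 2) → ℝ}
    (hf : Measurable f) : ∫ e, f (T e) ∂σ = ∫ e, f e ∂σ := by
  conv_rhs => rw [← hσ.2.2 T]
  rw [integral_map T.continuous.aemeasurable]
  rw [hσ.2.2 T]
  exact hf.aestronglyMeasurable

lemma integral_pow_coord (hσ : IsUniformOnSphere σ) (k : ℕ) (i : Fin (m + 2)) :
    ∫ e, (e i) ^ k ∂σ = ∫ e, (e 0) ^ k ∂σ := by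
  have := integral_comp_iso hσ (swapIso 0 i) (f := fun e => (e 0) ^ k)
    ((measurable_coord 0).pow_const k)
  rw [← this]
  apply integral_congr_ae
  filter_upwards with e
  simp only [swapIso_apply]
  rw [Equiv.swap_apply_left]

lemma integral_mixed (hσ : IsUniformOnSphere σ) (a : ℕ) (i : Fin (m + 2)) (hi : i ≠ 0) :
    ∫ e, (e 0) ^ a * (e i) ^ 2 ∂σ = ∫ e, (e 0) ^ a * (e 1) ^ 2 ∂σ := by
  rcases eq_or_ne i 1 with rfl | hi1
  · rfl
  · have := integral_comp_iso hσ (swapIso 1 i) (f := fun e => (e 0) ^ a * (e 1) ^ 2)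
      (((measurable_coord 0).pow_const a).mul ((measurable_coord 1).pow_const 2))
    rw [← this]
    apply integral_congr_ae
    filter_upwards with e
    simp only [swapIso_apply]
    rw [Equiv.swap_apply_left, Equiv.swap_apply_of_ne_of_ne (zero_ne_one') (Ne.symm hi)]


variable {m : ℕ} {σ : Measure (Euc (m + 2))}

lemma pow_even_nonneg (x : ℝ) (k : ℕ) : 0 ≤ x ^ (2 * k) := by
  rw [pow_mul]; positivity

lemma integrable_mixed_pow (hσ : IsUniformOnSphere σ) (a b : ℕ) (i j : Fin (m + 2)) :
    Integrable (fun e => (e i) ^ a * (e j) ^ b) σ := by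
  apply integrable_bound hσ (((measurable_coord i).pow_const a).mul
    ((measurable_coord j).pow_const b)) (C := 1)
  filter_upwards [ae_abs_le hσ] with e he
  rw [Pi.mul_apply, abs_mul, abs_pow, abs_pow]
  exact mul_le_one₀ (pow_le_one₀ (abs_nonneg _) (he i)) (by positivity)
    (pow_le_one₀ (abs_nonneg _) (he j))

lemma sum_identity (hσ : IsUniformOnSphere σ) (k : ℕ) :
    ∫ e, (e 0) ^ (2 * k) ∂σ
      = ∫ e, (e 0) ^ (2 * k + 2) ∂σ + (m + 1) * ∫ e, (e 0) ^ (2 * k) * (e 1) ^ 2 ∂σ := by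
  have step1 : ∫ e, (e 0) ^ (2 * k) ∂σ = ∫ e, ∑ i, (e 0) ^ (2 * k) * (e i) ^ 2 ∂σ := by
    apply integral_congr_ae
    filter_upwards [ae_sum_sq hσ] with e he
    rw [← Finset.mul_sum, he, mul_one]
  rw [step1, integral_finset_sum _ (fun i _ => integrable_mixed_pow hσ (2 * k) 2 0 i)]
  rw [← Finset.add_sum_erase _ _ (Finset.mem_univ (0 : Fin (m + 2)))]
  have h0 : ∫ e, (e 0) ^ (2 * k) * (e 0) ^ 2 ∂σ = ∫ e, (e 0) ^ (2 * k + 2) ∂σ := by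
    apply integral_congr_ae
    filter_upwards with e
    rw [← pow_add]
  have hrest : ∑ i ∈ Finset.univ.erase (0 : Fin (m + 2)),
      ∫ e, (e 0) ^ (2 * k) * (e i) ^ 2 ∂σ
      = (m + 1) * ∫ e, (e 0) ^ (2 * k) * (e 1) ^ 2 ∂σ := by
    rw [Finset.sum_congr rfl (fun i hi => integral_mixed hσ (2 * k) i
      (Finset.ne_of_mem_erase hi))]
    rw [Finset.sum_const, Finset.card_erase_of_mem (Finset.mem_univ _), Finset.card_univ,
      Fintype.card_fin, nsmul_eq_mul]
    norm_num
  rw [h0, hrest]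

/-! ### The key calculus identity -/

lemma ftc_key (k : ℕ) (x y : ℝ) :
    ∫ θ in (0:ℝ)..(2 * π), (Real.cos θ * x - Real.sin θ * y) ^ (2 * k + 2)
      = (2 * k + 1) * ∫ θ in (0:ℝ)..(2 * π),
          (Real.cos θ * x - Real.sin θ * y) ^ (2 * k) * (Real.sin θ * x + Real.cos θ * y) ^ 2 := by
  set u : ℝ → ℝ := fun θ => Real.cos θ * x - Real.sin θ * y with hu_def
  set v : ℝ → ℝ := fun θ => Real.sin θ * x + Real.cos θ * y with hv_def
  have hu : ∀ θ, HasDerivAt u (-(v θ)) θ := by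
    intro θ
    have := ((Real.hasDerivAt_cos θ).mul_const x).sub ((Real.hasDerivAt_sin θ).mul_const y)
    refine this.congr_deriv ?_
    simp [hv_def]; ring
  have hv : ∀ θ, HasDerivAt v (u θ) θ := by
    intro θ
    have := ((Real.hasDerivAt_sin θ).mul_const x).add ((Real.hasDerivAt_cos θ).mul_const y)
    refine this.congr_deriv ?_
    simp [hu_def]; ring
  have hucont : Continuous u := by fun_prop
  have hvcont : Continuous v := by fun_prop
  have hg : ∀ θ, HasDerivAt (fun θ => v θ * u θ ^ (2 * k + 1))
      (u θ ^ (2 * k + 2) - (2 * k + 1) * (u θ ^ (2 * k) * v θ ^ 2)) θ := by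
    intro θ
    have h1 : HasDerivAt (fun θ => u θ ^ (2 * k + 1))
        ((2 * k + 1) * u θ ^ (2 * k) * (-(v θ))) θ := by
      have := (hu θ).pow (2 * k + 1)
      exact this.congr_deriv (by simp)
    have := (hv θ).mul h1
    refine this.congr_deriv ?_
    ring
  have hint : ∫ θ in (0:ℝ)..(2 * π),
      (u θ ^ (2 * k + 2) - (2 * k + 1) * (u θ ^ (2 * k) * v θ ^ 2)) = 0 := by
    rw [intervalIntegral.integral_eq_sub_of_hasDerivAt (fun θ _ => hg θ)]
    · simp [hu_def, hv_def]
    · apply Continuous.intervalIntegrable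
      fun_prop
  have h1 : IntervalIntegrable (fun θ => u θ ^ (2 * k + 2)) volume 0 (2 * π) := by
    apply Continuous.intervalIntegrable; fun_prop
  have h2 : IntervalIntegrable (fun θ => u θ ^ (2 * k) * v θ ^ 2) volume 0 (2 * π) := by
    apply Continuous.intervalIntegrable; fun_prop
  rw [intervalIntegral.integral_sub h1 (h2.const_mul _)] at hint
  rw [intervalIntegral.integral_const_mul] at hint
  linarith

lemma integral_rot_comp (hσ : IsUniformOnSphere σ) (j l : ℕ) (θ : ℝ) :
    ∫ e, (Real.cos θ * e 0 - Real.sin θ * e 1) ^ j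
        * (Real.sin θ * e 0 + Real.cos θ * e 1) ^ l ∂σ
      = ∫ e, (e 0) ^ j * (e 1) ^ l ∂σ := by
  have := integral_comp_iso hσ (rot 0 1 zero_ne_one' θ) (f := fun e => (e 0) ^ j * (e 1) ^ l)
    (((measurable_coord 0).pow_const j).mul ((measurable_coord 1).pow_const l))
  rw [← this]
  apply integral_congr_ae
  filter_upwards with e
  simp only [rot_apply_a, rot_apply_b]

lemma fubini_rot (hσ : IsUniformOnSphere σ) (j l : ℕ) :
    (2 * π) * ∫ e, (e 0) ^ j * (e 1) ^ l ∂σ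
      = ∫ e, (∫ θ in Set.Ioc (0:ℝ) (2 * π),
          (Real.cos θ * e 0 - Real.sin θ * e 1) ^ j
            * (Real.sin θ * e 0 + Real.cos θ * e 1) ^ l) ∂σ := by
  haveI : IsProbabilityMeasure σ := hσ.1
  set μθ : Measure ℝ := volume.restrict (Set.Ioc (0:ℝ) (2 * π)) with hμθ
  haveI : IsFiniteMeasure μθ := by
    constructor
    rw [hμθ, Measure.restrict_apply_univ, Real.volume_Ioc]
    exact ENNReal.ofReal_lt_top
  set F : ℝ → Euc (m + 2) → ℝ := fun θ e =>
    (Real.cos θ * e 0 - Real.sin θ * e 1) ^ j * (Real.sin θ * e 0 + Real.cos θ * e 1) ^ l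
    with hF
  have hFcont : Continuous (Function.uncurry F) := by
    apply Continuous.mul <;> apply Continuous.pow
    · exact ((Real.continuous_cos.comp continuous_fst).mul
        ((PiLp.continuous_apply 2 _ 0).comp continuous_snd)).sub
        ((Real.continuous_sin.comp continuous_fst).mul
        ((PiLp.continuous_apply 2 _ 1).comp continuous_snd))
    · exact ((Real.continuous_sin.comp continuous_fst).mul
        ((PiLp.continuous_apply 2 _ 0).comp continuous_snd)).add
        ((Real.continuous_cos.comp continuous_fst).mul
        ((PiLp.continuous_apply 2 _ 1).comp continuous_snd))
  have hbad : (μθ.prod σ) {p : ℝ × Euc (m + 2) | ¬ (|p.2 0| ≤ 1 ∧ |p.2 1| ≤ 1)} = 0 := by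
    have hB : σ {e : Euc (m + 2) | ¬ (|e 0| ≤ 1 ∧ |e 1| ≤ 1)} = 0 := by
      have h := ae_abs_le hσ
      rw [MeasureTheory.ae_iff] at h
      refine measure_mono_null ?_ h
      intro e he
      simp only [Set.mem_setOf_eq] at he ⊢
      intro hcon
      exact he ⟨hcon 0, hcon 1⟩
    have hsub : {p : ℝ × Euc (m + 2) | ¬ (|p.2 0| ≤ 1 ∧ |p.2 1| ≤ 1)}
        ⊆ Set.univ ×ˢ {e : Euc (m + 2) | ¬ (|e 0| ≤ 1 ∧ |e 1| ≤ 1)} := by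
      intro p hp
      exact ⟨Set.mem_univ _, hp⟩
    refine measure_mono_null hsub ?_
    rw [Measure.prod_prod, hB, mul_zero]
  have hFint : Integrable (Function.uncurry F) (μθ.prod σ) := by
    apply Integrable.mono' (integrable_const ((2:ℝ) ^ j * 2 ^ l))
      hFcont.aestronglyMeasurable
    rw [MeasureTheory.ae_iff]
    refine measure_mono_null ?_ hbad
    intro p hp
    simp only [Set.mem_setOf_eq] at hp ⊢
    intro hcon
    apply hp
    obtain ⟨h0, h1⟩ := hcon
    have hc : ∀ θ : ℝ, |Real.cos θ| ≤ 1 := fun θ => Real.abs_cos_le_one θ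
    have hs : ∀ θ : ℝ, |Real.sin θ| ≤ 1 := fun θ => Real.abs_sin_le_one θ
    have a1 : |Real.cos p.1 * p.2 0| ≤ 1 := by
      rw [abs_mul]; exact mul_le_one₀ (hc _) (abs_nonneg _) h0
    have a2 : |Real.sin p.1 * p.2 1| ≤ 1 := by
      rw [abs_mul]; exact mul_le_one₀ (hs _) (abs_nonneg _) h1
    have a3 : |Real.sin p.1 * p.2 0| ≤ 1 := by
      rw [abs_mul]; exact mul_le_one₀ (hs _) (abs_nonneg _) h0
    have a4 : |Real.cos p.1 * p.2 1| ≤ 1 := by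
      rw [abs_mul]; exact mul_le_one₀ (hc _) (abs_nonneg _) h1
    have e1 : |Real.cos p.1 * p.2 0 - Real.sin p.1 * p.2 1| ≤ 2 := by
      have := abs_sub (Real.cos p.1 * p.2 0) (Real.sin p.1 * p.2 1)
      linarith
    have e2 : |Real.sin p.1 * p.2 0 + Real.cos p.1 * p.2 1| ≤ 2 := by
      have := abs_add_le (Real.sin p.1 * p.2 0) (Real.cos p.1 * p.2 1)
      linarith
    have : ‖Function.uncurry F p‖ ≤ 2 ^ j * 2 ^ l := by
      rw [Function.uncurry, hF]
      simp only [Real.norm_eq_abs, abs_mul, abs_pow]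
      have b1 : |Real.cos p.1 * p.2 0 - Real.sin p.1 * p.2 1| ^ j ≤ 2 ^ j :=
        pow_le_pow_left₀ (abs_nonneg _) e1 j
      have b2 : |Real.sin p.1 * p.2 0 + Real.cos p.1 * p.2 1| ^ l ≤ 2 ^ l :=
        pow_le_pow_left₀ (abs_nonneg _) e2 l
      exact mul_le_mul b1 b2 (by positivity) (by positivity)
    exact this
  have hswap := integral_integral_swap hFint
  have hleft : ∫ θ, (∫ e, F θ e ∂σ) ∂μθ = (2 * π) * ∫ e, (e 0) ^ j * (e 1) ^ l ∂σ := by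
    have heach : ∀ θ : ℝ, (∫ e, F θ e ∂σ) = ∫ e, (e 0) ^ j * (e 1) ^ l ∂σ := fun θ =>
      integral_rot_comp hσ j l θ
    rw [integral_congr_ae (Filter.Eventually.of_forall heach)]
    rw [integral_const]
    rw [hμθ, measureReal_restrict_apply_univ, Measure.real, Real.volume_Ioc]
    rw [ENNReal.toReal_ofReal (by linarith [Real.pi_pos] : (0:ℝ) ≤ 2 * π - 0)]
    rw [smul_eq_mul]
    ring_nf
  rw [hleft] at hswap
  exact hswap

lemma rot_identity (hσ : IsUniformOnSphere σ) (k : ℕ) :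
    ∫ e, (e 0) ^ (2 * k + 2) ∂σ = (2 * k + 1) * ∫ e, (e 0) ^ (2 * k) * (e 1) ^ 2 ∂σ := by
  have hA := fubini_rot hσ (2 * k + 2) 0
  have hB := fubini_rot hσ (2 * k) 2
  have hpoint : ∀ e : Euc (m + 2),
      (∫ θ in Set.Ioc (0:ℝ) (2 * π),
          (Real.cos θ * e 0 - Real.sin θ * e 1) ^ (2 * k + 2)
            * (Real.sin θ * e 0 + Real.cos θ * e 1) ^ 0)
        = (2 * k + 1) * ∫ θ in Set.Ioc (0:ℝ) (2 * π),
          (Real.cos θ * e 0 - Real.sin θ * e 1) ^ (2 * k)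
            * (Real.sin θ * e 0 + Real.cos θ * e 1) ^ 2 := by
    intro e
    have h2pi : (0:ℝ) ≤ 2 * π := by nlinarith [Real.pi_pos]
    have := ftc_key k (e 0) (e 1)
    rw [intervalIntegral.integral_of_le h2pi, intervalIntegral.integral_of_le h2pi] at this
    simp only [pow_zero, mul_one]
    exact_mod_cast this
  have hA0 : ∫ e, (e 0) ^ (2 * k + 2) * (e 1 : ℝ) ^ 0 ∂σ = ∫ e, (e 0) ^ (2 * k + 2) ∂σ := by
    apply integral_congr_ae; filter_upwards with e; rw [pow_zero, mul_one]
  rw [hA0] at hA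
  have : ∫ e, (∫ θ in Set.Ioc (0:ℝ) (2 * π),
      (Real.cos θ * e 0 - Real.sin θ * e 1) ^ (2 * k + 2)
        * (Real.sin θ * e 0 + Real.cos θ * e 1) ^ 0) ∂σ
      = (2 * k + 1) * ∫ e, (∫ θ in Set.Ioc (0:ℝ) (2 * π),
      (Real.cos θ * e 0 - Real.sin θ * e 1) ^ (2 * k)
        * (Real.sin θ * e 0 + Real.cos θ * e 1) ^ 2) ∂σ := by
    rw [← MeasureTheory.integral_const_mul]
    exact integral_congr_ae (Filter.Eventually.of_forall hpoint)
  have hπ : (2 * π) ≠ 0 := by nlinarith [Real.pi_pos]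
  apply mul_left_cancel₀ hπ
  rw [hA, this, ← hB]
  ring

lemma moment_nonneg (k : ℕ) : 0 ≤ ∫ e, (e 0 : ℝ) ^ (2 * k) ∂σ :=
  integral_nonneg fun e => pow_even_nonneg _ k

lemma mixed_nonneg (k : ℕ) : 0 ≤ ∫ e, (e 0 : ℝ) ^ (2 * k) * (e 1) ^ 2 ∂σ :=
  integral_nonneg fun e => mul_nonneg (pow_even_nonneg _ k) (sq_nonneg _)

lemma moment_rec (hσ : IsUniformOnSphere σ) (k : ℕ) :
    ((m : ℝ) + 2) * ∫ e, (e 0) ^ (2 * (k + 1)) ∂σ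
      ≤ (2 * (k : ℝ) + 1) * ∫ e, (e 0) ^ (2 * k) ∂σ := by
  have hs := sum_identity hσ k
  have hr := rot_identity hσ k
  have h22 : 2 * (k + 1) = 2 * k + 2 := by ring
  rw [h22]
  have hP1 := moment_nonneg (σ := σ) (k + 1)
  rw [show 2 * (k + 1) = 2 * k + 2 from by ring] at hP1
  have hQ := mixed_nonneg (σ := σ) k
  nlinarith [hs, hr, hP1, hQ, Nat.cast_nonneg (α := ℝ) k]

lemma moment_le (hσ : IsUniformOnSphere σ) (k : ℕ) :
    ∫ e, (e 0) ^ (2 * k) ∂σ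
      ≤ (∏ j ∈ Finset.range k, (2 * (j : ℝ) + 1)) / ((m : ℝ) + 2) ^ k := by
  haveI : IsProbabilityMeasure σ := hσ.1
  induction k with
  | zero => simp
  | succ k ih =>
    have hrec := moment_rec hσ k
    have hm2 : (0 : ℝ) < (m : ℝ) + 2 := by positivity
    have h1 : ∫ e, (e 0) ^ (2 * (k + 1)) ∂σ
        ≤ (2 * (k : ℝ) + 1) / ((m : ℝ) + 2) * ∫ e, (e 0) ^ (2 * k) ∂σ := by
      rw [div_mul_eq_mul_div, le_div_iff₀ hm2]
      nlinarith [hrec]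
    calc ∫ e, (e 0) ^ (2 * (k + 1)) ∂σ
        ≤ (2 * (k : ℝ) + 1) / ((m : ℝ) + 2) * ∫ e, (e 0) ^ (2 * k) ∂σ := h1
      _ ≤ (2 * (k : ℝ) + 1) / ((m : ℝ) + 2)
            * ((∏ j ∈ Finset.range k, (2 * (j : ℝ) + 1)) / ((m : ℝ) + 2) ^ k) := by
          apply mul_le_mul_of_nonneg_left ih (by positivity)
      _ = (∏ j ∈ Finset.range (k + 1), (2 * (j : ℝ) + 1)) / ((m : ℝ) + 2) ^ (k + 1) := by
          rw [Finset.prod_range_succ]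
          field_simp
          ring

/-! ### The sup norm -/

lemma linfty_nonneg (x : Euc (m + 2)) : 0 ≤ linftyNorm x := by
  refine le_trans (abs_nonneg (x 0)) ?_
  exact le_ciSup (f := fun i => |x i|) (Finite.bddAbove_range _) 0

lemma linfty_le_one (hσ : IsUniformOnSphere σ) : ∀ᵐ e ∂σ, linftyNorm e ≤ 1 := by
  filter_upwards [ae_abs_le hσ] with e he
  exact ciSup_le he

lemma continuous_linfty : Continuous (linftyNorm (n := m + 2)) := by
  have heq : (linftyNorm (n := m + 2))
      = fun x => Finset.univ.sup' Finset.univ_nonempty (fun i => |x i|) := by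
    funext x
    rw [linftyNorm, Finset.sup'_univ_eq_ciSup]
  rw [heq, continuous_iff_continuousAt]
  intro x
  exact ContinuousAt.finset_sup'_apply Finset.univ_nonempty
    (fun i _ => ((PiLp.continuous_apply 2 _ i).abs).continuousAt)

lemma integrable_linfty_sq (hσ : IsUniformOnSphere σ) :
    Integrable (fun e => linftyNorm e ^ 2) σ := by
  apply integrable_bound hσ (continuous_linfty.measurable.pow_const 2) (C := 1)
  filter_upwards [linfty_le_one hσ] with e he
  rw [abs_of_nonneg (by positivity)]
  exact pow_le_one₀ (linfty_nonneg e) he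

lemma linfty_sq_le (k : ℕ) (hk : 1 ≤ k) (x : Euc (m + 2)) :
    linftyNorm x ^ 2 ≤ (∑ i, (x i) ^ (2 * k)) ^ (1 / (k : ℝ)) := by
  obtain ⟨i₀, _, hi₀⟩ := Finset.exists_mem_eq_sup' (Finset.univ_nonempty (α := Fin (m + 2)))
    (fun j => |x j|)
  have hmax : linftyNorm x = |x i₀| := by
    rw [linftyNorm, ← Finset.sup'_univ_eq_ciSup, hi₀]
  have h1 : linftyNorm x ^ (2 * k) ≤ ∑ i, (x i) ^ (2 * k) := by
    rw [hmax]
    calc |x i₀| ^ (2 * k) = (x i₀) ^ (2 * k) := by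
          rw [pow_mul, sq_abs, ← pow_mul]
      _ ≤ ∑ i, (x i) ^ (2 * k) :=
          Finset.single_le_sum (fun i _ => pow_even_nonneg _ k) (Finset.mem_univ i₀)
  have hkR : (0 : ℝ) < (k : ℝ) := by exact_mod_cast hk
  have h2 : ((linftyNorm x ^ 2) ^ k : ℝ) ≤ ∑ i, (x i) ^ (2 * k) := by
    rw [← pow_mul]
    rw [show 2 * k = k * 2 from by ring] at h1
    rwa [show k * 2 = 2 * k from by ring] at h1
  calc linftyNorm x ^ 2 = ((linftyNorm x ^ 2) ^ k) ^ (1 / (k : ℝ)) := by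
        rw [← Real.rpow_natCast ((linftyNorm x) ^ 2) k, ← Real.rpow_mul (by positivity),
          mul_one_div, div_self hkR.ne', Real.rpow_one]
    _ ≤ (∑ i, (x i) ^ (2 * k)) ^ (1 / (k : ℝ)) := by
        apply Real.rpow_le_rpow (by positivity) h2 (by positivity)

lemma jensen_bound (hσ : IsUniformOnSphere σ) (k : ℕ) (hk : 1 ≤ k) :
    ∫ e, linftyNorm e ^ 2 ∂σ
      ≤ (((m : ℝ) + 2) * ∫ e, (e 0) ^ (2 * k) ∂σ) ^ (1 / (k : ℝ)) := by
  haveI : IsProbabilityMeasure σ := hσ.1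
  have hkR : (0 : ℝ) < (k : ℝ) := by exact_mod_cast hk
  set f : Euc (m + 2) → ℝ := fun e => ∑ i, (e i) ^ (2 * k) with hf
  have hfmeas : Measurable f := by
    apply Finset.measurable_sum
    intro i _
    exact (measurable_coord i).pow_const _
  have hfnn : ∀ e, 0 ≤ f e := fun e => Finset.sum_nonneg fun i _ => pow_even_nonneg _ k
  have hfle : ∀ᵐ e ∂σ, f e ≤ (m : ℝ) + 2 := by
    filter_upwards [ae_abs_le hσ] with e he
    calc f e ≤ ∑ _i : Fin (m + 2), (1 : ℝ) := by
          apply Finset.sum_le_sum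
          intro i _
          calc (e i) ^ (2 * k) = |e i| ^ (2 * k) := by rw [pow_mul, ← sq_abs, ← pow_mul]
            _ ≤ 1 := pow_le_one₀ (abs_nonneg _) (he i)
      _ = (m : ℝ) + 2 := by
          rw [Finset.sum_const, Finset.card_univ, Fintype.card_fin, nsmul_eq_mul, mul_one]
          push_cast; ring
  have hfint : Integrable f σ := by
    apply integrable_bound hσ hfmeas (C := (m : ℝ) + 2)
    filter_upwards [hfle] with e he
    rw [abs_of_nonneg (hfnn e)]
    exact he
  have hgmeas : Measurable fun e => f e ^ (1 / (k : ℝ)) :=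
    (Real.continuous_rpow_const (by positivity)).measurable.comp hfmeas
  have hgint : Integrable (fun e => f e ^ (1 / (k : ℝ))) σ := by
    apply integrable_bound hσ hgmeas (C := ((m : ℝ) + 2) ^ (1 / (k : ℝ)))
    filter_upwards [hfle] with e he
    rw [abs_of_nonneg (Real.rpow_nonneg (hfnn e) _)]
    exact Real.rpow_le_rpow (hfnn e) he (by positivity)
  have hmono : ∫ e, linftyNorm e ^ 2 ∂σ ≤ ∫ e, f e ^ (1 / (k : ℝ)) ∂σ := by
    apply integral_mono_ae (integrable_linfty_sq hσ) hgint
    filter_upwards with e using linfty_sq_le k hk e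
  have hcc : ConcaveOn ℝ (Set.Ici 0) (fun x : ℝ => x ^ (1 / (k : ℝ))) :=
    Real.concaveOn_rpow (by positivity) (by
      rw [div_le_one hkR]; exact_mod_cast hk)
  have hjen : ∫ e, f e ^ (1 / (k : ℝ)) ∂σ ≤ (∫ e, f e ∂σ) ^ (1 / (k : ℝ)) := by
    have := hcc.le_map_integral
      ((Real.continuous_rpow_const (by positivity)).continuousOn)
      isClosed_Ici
      (Filter.Eventually.of_forall fun e => hfnn e)
      hfint hgint
    exact this
  have hsum : ∫ e, f e ∂σ = ((m : ℝ) + 2) * ∫ e, (e 0) ^ (2 * k) ∂σ := by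
    rw [hf]
    rw [integral_finset_sum _ (fun i _ => by
      simpa using integrable_mixed_pow hσ (2 * k) 0 i 0)]
    rw [Finset.sum_congr rfl (fun i _ => integral_pow_coord hσ (2 * k) i)]
    rw [Finset.sum_const, Finset.card_univ, Fintype.card_fin, nsmul_eq_mul]
    push_cast; ring
  rw [← hsum]
  exact hmono.trans hjen

end Measure

/-! ### Numeric bound for the double factorial -/

lemma dfact_bound (k : ℕ) (hk : 3 ≤ k) :
    Real.exp 1 ^ k * ∏ j ∈ Finset.range k, (2 * (j : ℝ) + 1)
      ≤ 4 ^ k * ((k : ℝ) - 1) ^ k := by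
  induction k, hk using Nat.le_induction with
  | base =>
      have h3 : ∏ j ∈ Finset.range 3, (2 * (j : ℝ) + 1) = 15 := by
        norm_num [Finset.prod_range_succ]
      rw [h3]
      have he : Real.exp 1 ≤ 2.7182818286 := (Real.exp_one_lt_d9).le
      have hp : Real.exp 1 ^ 3 ≤ 2.7182818286 ^ 3 :=
        pow_le_pow_left₀ (Real.exp_pos 1).le he 3
      norm_num at hp ⊢
      nlinarith [hp]
  | succ k hk3 ih =>
      have hkR : (3 : ℝ) ≤ (k : ℝ) := by exact_mod_cast hk3
      have hprodnn : 0 ≤ ∏ j ∈ Finset.range k, (2 * (j : ℝ) + 1) :=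
        Finset.prod_nonneg fun j _ => by positivity
      have h1 : (0 : ℝ) < (k : ℝ) - 1 := by linarith
      have hb : 2 * ((k : ℝ) - 1) ^ k ≤ (k : ℝ) ^ k := by
        have hneg2 : (-2 : ℝ) ≤ 1 / ((k : ℝ) - 1) := by
          have : (0:ℝ) ≤ 1 / ((k : ℝ) - 1) := by positivity
          linarith
        have hbern := one_add_mul_le_pow hneg2 k
        have h2 : (2 : ℝ) ≤ (1 + 1 / ((k : ℝ) - 1)) ^ k := by
          refine le_trans ?_ hbern
          rw [mul_one_div]
          have : (1 : ℝ) ≤ (k : ℝ) / ((k : ℝ) - 1) := by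
            rw [le_div_iff₀ h1]; linarith
          linarith
        have h3 : (1 + 1 / ((k : ℝ) - 1)) = (k : ℝ) / ((k : ℝ) - 1) := by field_simp; ring
        rw [h3, div_pow] at h2
        have h4 := mul_le_mul_of_nonneg_right h2 (le_of_lt (pow_pos h1 k))
        rw [div_mul_cancel₀] at h4
        · linarith
        · positivity
      have he : Real.exp 1 ≤ 2.72 := by nlinarith [Real.exp_one_lt_d9]
      have s1 : Real.exp 1 ^ (k + 1) * ∏ j ∈ Finset.range (k + 1), (2 * (j : ℝ) + 1)
          = (Real.exp 1 * (2 * (k : ℝ) + 1))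
            * (Real.exp 1 ^ k * ∏ j ∈ Finset.range k, (2 * (j : ℝ) + 1)) := by
        rw [Finset.prod_range_succ, pow_succ]
        ring
      have hfac : (0 : ℝ) ≤ Real.exp 1 * (2 * (k : ℝ) + 1) := by
        have := Real.exp_pos 1
        nlinarith
      have s2 : (Real.exp 1 * (2 * (k : ℝ) + 1))
            * (Real.exp 1 ^ k * ∏ j ∈ Finset.range k, (2 * (j : ℝ) + 1))
          ≤ (Real.exp 1 * (2 * (k : ℝ) + 1)) * (4 ^ k * ((k : ℝ) - 1) ^ k) :=
        mul_le_mul_of_nonneg_left ih hfac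
      have s3 : (Real.exp 1 * (2 * (k : ℝ) + 1)) * (4 ^ k * ((k : ℝ) - 1) ^ k)
          ≤ (8 * (k : ℝ)) * (4 ^ k * ((k : ℝ) - 1) ^ k) := by
        apply mul_le_mul_of_nonneg_right _ (by positivity)
        nlinarith [he]
      have s5 : (8 * (k : ℝ)) * (4 ^ k * ((k : ℝ) - 1) ^ k)
          ≤ (4 * (k : ℝ)) * 4 ^ k * (k : ℝ) ^ k := by
        have := mul_le_mul_of_nonneg_left hb
          (by positivity : (0 : ℝ) ≤ (4 * (k : ℝ)) * 4 ^ k)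
        calc (8 * (k : ℝ)) * (4 ^ k * ((k : ℝ) - 1) ^ k)
            = (4 * (k : ℝ)) * 4 ^ k * (2 * ((k : ℝ) - 1) ^ k) := by ring
          _ ≤ (4 * (k : ℝ)) * 4 ^ k * (k : ℝ) ^ k := this
      have hrhs : 4 ^ (k + 1) * (((k : ℕ) + 1 : ℝ) - 1) ^ (k + 1)
          = (4 * (k : ℝ)) * 4 ^ k * (k : ℝ) ^ k := by
        push_cast
        rw [pow_succ, pow_succ]
        ring_nf
      calc Real.exp 1 ^ (k + 1) * ∏ j ∈ Finset.range (k + 1), (2 * (j : ℝ) + 1)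
          = (Real.exp 1 * (2 * (k : ℝ) + 1))
            * (Real.exp 1 ^ k * ∏ j ∈ Finset.range k, (2 * (j : ℝ) + 1)) := s1
        _ ≤ (Real.exp 1 * (2 * (k : ℝ) + 1)) * (4 ^ k * ((k : ℝ) - 1) ^ k) := s2
        _ ≤ (8 * (k : ℝ)) * (4 ^ k * ((k : ℝ) - 1) ^ k) := s3
        _ ≤ (4 * (k : ℝ)) * 4 ^ k * (k : ℝ) ^ k := s5
        _ = 4 ^ (k + 1) * (((k : ℕ) + 1 : ℝ) - 1) ^ (k + 1) := hrhs.symm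
        _ = 4 ^ (k + 1) * (((k + 1 : ℕ) : ℝ) - 1) ^ (k + 1) := by push_cast; ring

end

end SphereMomentAux

/-- If `e` is uniform on the unit Euclidean sphere of `ℝⁿ` (`n ≥ 2`), then
`E[‖e‖_∞²] ≤ 4 (ln n)/n`. -/
theorem sphere_linfty_norm_moment {n : ℕ} (hn : 2 ≤ n)
    (σ : Measure (EuclideanSpace ℝ (Fin n))) (hσ : IsUniformOnSphere σ) :
    ∫ e, linftyNorm e ^ 2 ∂σ ≤ 4 * Real.log n / n := by
  open SphereMomentAux in
  obtain ⟨m, rfl⟩ : ∃ m, n = m + 2 := ⟨n - 2, by omega⟩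
  haveI : IsProbabilityMeasure σ := hσ.1
  have hNpos : (0 : ℝ) < ((m + 2 : ℕ) : ℝ) := by positivity
  by_cases hsmall : m + 2 ≤ 7
  · -- small dimensions: trivial bound `∫ ≤ 1` suffices
    have hle1 : ∫ e, linftyNorm e ^ 2 ∂σ ≤ 1 := by
      have hint := SphereMomentAux.integrable_linfty_sq hσ
      have := integral_mono_ae hint (integrable_const (1 : ℝ)) ?_
      · simpa using this
      · filter_upwards [SphereMomentAux.linfty_le_one hσ] with e he
        exact pow_le_one₀ (SphereMomentAux.linfty_nonneg e) he
    refine hle1.trans ?_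
    -- need `1 ≤ 4 log n / n`, i.e. `n ≤ 4 log n`, i.e. `exp n ≤ n ^ 4`
    have hexp1 : Real.exp 1 ≤ 2.7182818286 := Real.exp_one_lt_d9.le
    have hexp : Real.exp (((m + 2 : ℕ) : ℝ)) ≤ ((m + 2 : ℕ) : ℝ) ^ 4 := by
      have hkey : ∀ c : ℕ, Real.exp 1 ^ c ≤ ((c : ℕ) : ℝ) ^ 4 →
          Real.exp (((c : ℕ) : ℝ)) ≤ ((c : ℕ) : ℝ) ^ 4 := by
        intro c h
        rwa [Real.exp_one_pow] at h
      apply hkey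
      have hm5 : m ≤ 5 := by omega
      have hp : ∀ c : ℕ, Real.exp 1 ^ c ≤ (2.7182818286 : ℝ) ^ c := fun c =>
        pow_le_pow_left₀ (Real.exp_pos 1).le hexp1 c
      interval_cases m
      · exact (hp 2).trans (by norm_num)
      · exact (hp 3).trans (by norm_num)
      · exact (hp 4).trans (by norm_num)
      · exact (hp 5).trans (by norm_num)
      · exact (hp 6).trans (by norm_num)
      · exact (hp 7).trans (by norm_num)
    have hlog := Real.log_le_log (Real.exp_pos _) hexp
    rw [Real.log_exp, Real.log_pow] at hlog
    rw [le_div_iff₀ hNpos, one_mul]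
    push_cast at hlog ⊢
    linarith
  · -- main case : `n ≥ 8`
    push_neg at hsmall
    set L := Real.log (((m + 2 : ℕ) : ℝ)) with hL
    have hn8 : (8 : ℝ) ≤ ((m + 2 : ℕ) : ℝ) := by exact_mod_cast hsmall
    have hL2 : 2 < L := by
      have h8 : Real.log 8 ≤ L := Real.log_le_log (by norm_num) hn8
      have h83 : Real.log 8 = 3 * Real.log 2 := by
        rw [show (8 : ℝ) = 2 ^ 3 by norm_num, Real.log_pow]
        norm_num
      nlinarith [Real.log_two_gt_d9]
    have hLpos : 0 < L := by linarith
    set k := ⌈L⌉₊ with hk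
    have hk3 : 3 ≤ k := by
      have : 2 < ⌈L⌉₊ := Nat.lt_ceil.mpr (by exact_mod_cast hL2)
      omega
    have hk1 : 1 ≤ k := by omega
    have hkR : (0 : ℝ) < (k : ℝ) := by
      have : (0:ℕ) < k := by omega
      exact_mod_cast this
    have hLk : L ≤ (k : ℝ) := Nat.le_ceil L
    have hk1L : (k : ℝ) - 1 ≤ L := by
      have := Nat.ceil_lt_add_one hLpos.le
      linarith
    have hkm1 : (2 : ℝ) ≤ (k : ℝ) - 1 := by
      have : (3 : ℝ) ≤ (k : ℝ) := by exact_mod_cast hk3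
      linarith
    have hexpk : ((m + 2 : ℕ) : ℝ) ≤ Real.exp 1 ^ k := by
      have h1 : ((m + 2 : ℕ) : ℝ) = Real.exp L := (Real.exp_log hNpos).symm
      rw [h1, Real.exp_one_pow]
      exact Real.exp_le_exp.mpr hLk
    have hPk := SphereMomentAux.moment_le hσ k
    have hPknn := SphereMomentAux.moment_nonneg (σ := σ) k
    have hprodnn : 0 ≤ ∏ j ∈ Finset.range k, (2 * (j : ℝ) + 1) :=
      Finset.prod_nonneg fun j _ => by positivity
    have hnum := dfact_bound k hk3
    have hcast : ((m + 2 : ℕ) : ℝ) = (m : ℝ) + 2 := by push_cast; ring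
    have hstep : ((m + 2 : ℕ) : ℝ) * ∫ e, (e 0) ^ (2 * k) ∂σ
        ≤ (4 * L / ((m + 2 : ℕ) : ℝ)) ^ k := by
      calc ((m + 2 : ℕ) : ℝ) * ∫ e, (e 0) ^ (2 * k) ∂σ
          ≤ ((m + 2 : ℕ) : ℝ)
            * ((∏ j ∈ Finset.range k, (2 * (j : ℝ) + 1)) / ((m : ℝ) + 2) ^ k) :=
            mul_le_mul_of_nonneg_left hPk hNpos.le
        _ = (((m + 2 : ℕ) : ℝ) * ∏ j ∈ Finset.range k, (2 * (j : ℝ) + 1))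
            / (((m + 2 : ℕ) : ℝ)) ^ k := by rw [hcast]; ring
        _ ≤ (4 * L) ^ k / (((m + 2 : ℕ) : ℝ)) ^ k := by
            have hc1 : ((m + 2 : ℕ) : ℝ) * ∏ j ∈ Finset.range k, (2 * (j : ℝ) + 1)
                ≤ Real.exp 1 ^ k * ∏ j ∈ Finset.range k, (2 * (j : ℝ) + 1) :=
              mul_le_mul_of_nonneg_right hexpk hprodnn
            have hc3 : (4 : ℝ) ^ k * ((k : ℝ) - 1) ^ k = (4 * ((k : ℝ) - 1)) ^ k :=
              (mul_pow _ _ _).symm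
            have hc4 : (4 * ((k : ℝ) - 1)) ^ k ≤ (4 * L) ^ k :=
              pow_le_pow_left₀ (by linarith) (by linarith) k
            have hfin : ((m + 2 : ℕ) : ℝ) * ∏ j ∈ Finset.range k, (2 * (j : ℝ) + 1)
                ≤ (4 * L) ^ k := by nlinarith [hnum]
            gcongr
        _ = (4 * L / ((m + 2 : ℕ) : ℝ)) ^ k := by rw [div_pow]
    have hJ := SphereMomentAux.jensen_bound hσ k hk1
    have h4Ln : (0 : ℝ) ≤ 4 * L / ((m + 2 : ℕ) : ℝ) := by positivity
    calc ∫ e, linftyNorm e ^ 2 ∂σ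
        ≤ (((m : ℝ) + 2) * ∫ e, (e 0) ^ (2 * k) ∂σ) ^ (1 / (k : ℝ)) := hJ
      _ = (((m + 2 : ℕ) : ℝ) * ∫ e, (e 0) ^ (2 * k) ∂σ) ^ (1 / (k : ℝ)) := by
          rw [hcast]
      _ ≤ ((4 * L / ((m + 2 : ℕ) : ℝ)) ^ k) ^ (1 / (k : ℝ)) :=
          Real.rpow_le_rpow (by positivity) hstep (by positivity)
      _ = 4 * L / ((m + 2 : ℕ) : ℝ) := by
          rw [← Real.rpow_natCast (4 * L / ((m + 2 : ℕ) : ℝ)) k,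
            ← Real.rpow_mul h4Ln, mul_one_div, div_self hkR.ne', Real.rpow_one]
      _ = 4 * Real.log ((m + 2 : ℕ) : ℝ) / ((m + 2 : ℕ) : ℝ) := by rw [hL]
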